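/- Let A and B be normal n×n complex matrices. Then for every index j, s_j(AB + BA) ≤ s_j( (AAᴴ + BBᴴ) ⊕ (AAᴴ + BBᴴ) ), where the right-hand matrix is the 2n×2n block diagonal matrix with both diagonal blocks equal to AAᴴ + BBᴴ. -/

import Mathlib

open Matrix
open scoped ComplexOrder

/-- `singularValues X j` is the `(j+1)`-th largest singular value of `X`, i.e. the
decreasingly ordered square roots of the eigenvalues of `Xᴴ * X`. -/
noncomputable def singularValues {m : ℕ} (X : Matrix (Fin m) (Fin m) ℂ) : Fin m → ℝ :=
  fun j => Real.sqrt
    ((Matrix.isHermitian_conjTranspose_mul_self X).eigenvalues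
      (Tuple.sort (Matrix.isHermitian_conjTranspose_mul_self X).eigenvalues j.rev))

/-- `matAbs X = |X|` is the positive semidefinite square root of `Xᴴ * X`. -/
noncomputable def matAbs {m : ℕ} (X : Matrix (Fin m) (Fin m) ℂ) : Matrix (Fin m) (Fin m) ℂ :=
  (Matrix.isHermitian_conjTranspose_mul_self X).eigenvectorUnitary.1 *
    diagonal ((↑) ∘ (√·) ∘ (Matrix.isHermitian_conjTranspose_mul_self X).eigenvalues) *
    (star (Matrix.isHermitian_conjTranspose_mul_self X).eigenvectorUnitary : Matrix (Fin m) (Fin m) ℂ)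

/-- `dsum X Y = X ⊕ Y` is the block diagonal matrix with diagonal blocks `X` and `Y`. -/
noncomputable def dsum {m : ℕ} (X Y : Matrix (Fin m) (Fin m) ℂ) :
    Matrix (Fin (m + m)) (Fin (m + m)) ℂ :=
  Matrix.reindex finSumFinEquiv finSumFinEquiv (Matrix.fromBlocks X 0 0 Y)

/-- `matPosPart X = X⁺ = (|X| + X)/2`. -/
noncomputable def matPosPart {m : ℕ} (X : Matrix (Fin m) (Fin m) ℂ) : Matrix (Fin m) (Fin m) ℂ :=
  (2 : ℂ)⁻¹ • (matAbs X + X)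

/-- `matNegPart X = X⁻ = (|X| - X)/2`. -/
noncomputable def matNegPart {m : ℕ} (X : Matrix (Fin m) (Fin m) ℂ) : Matrix (Fin m) (Fin m) ℂ :=
  (2 : ℂ)⁻¹ • (matAbs X - X)

lemma conj_dot {m : ℕ} (x y : Fin m → ℂ) :
    starRingEnd ℂ (star x ⬝ᵥ y) = star y ⬝ᵥ x := by
  simp [dotProduct, map_sum, mul_comm]

lemma dot_sum_smul_right {m q : ℕ} (x : Fin m → ℂ) (d : Fin q → ℂ) (w : Fin q → Fin m → ℂ) :
    star x ⬝ᵥ (∑ i, d i • w i) = ∑ i, d i * (star x ⬝ᵥ w i) := by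
  simp only [dotProduct, Pi.smul_apply, Finset.sum_apply, smul_eq_mul, Finset.mul_sum]
  rw [Finset.sum_comm]
  exact Finset.sum_congr rfl fun i _ => Finset.sum_congr rfl fun r _ => by ring

lemma dot_sum_smul_ortho {m q : ℕ} (w : Fin q → Fin m → ℂ)
    (hw : ∀ i l, star (w i) ⬝ᵥ w l = if i = l then 1 else 0) (d : Fin q → ℂ) (l : Fin q) :
    star (w l) ⬝ᵥ (∑ i, d i • w i) = d l := by
  rw [dot_sum_smul_right]
  simp [hw, eq_comm]

lemma mulVec_sum_smul {m q : ℕ} (H : Matrix (Fin m) (Fin m) ℂ) (d : Fin q → ℂ)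
    (w : Fin q → Fin m → ℂ) :
    H *ᵥ (∑ i, d i • w i) = ∑ i, d i • (H *ᵥ w i) := by
  funext r
  simp only [Matrix.mulVec, dotProduct, Pi.smul_apply, Finset.sum_apply, smul_eq_mul,
    Finset.mul_sum]
  rw [Finset.sum_comm]
  exact Finset.sum_congr rfl fun i _ => Finset.sum_congr rfl fun a _ => by ring

lemma key_lemma {m q : ℕ} (H : Matrix (Fin m) (Fin m) ℂ) (hH : H.IsHermitian)
    (k : Fin m) (hq : (k : ℕ) + q = m) (c : ℝ)
    (w : Fin q → Fin m → ℂ)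
    (hw : ∀ i l, star (w i) ⬝ᵥ w l = if i = l then 1 else 0)
    (hrq : ∀ d : Fin q → ℂ,
      c * ∑ i, Complex.normSq (d i)
        ≤ (star (∑ i, d i • w i) ⬝ᵥ (H *ᵥ ∑ i, d i • w i)).re) :
    c ≤ hH.eigenvalues (Tuple.sort hH.eigenvalues k) := by
  classical
  have hkm := k.isLt
  set σ := Tuple.sort hH.eigenvalues with hσ
  set μ := hH.eigenvalues (σ k) with hμ
  set E : Fin m → Fin m → ℂ := fun a => ⇑(hH.eigenvectorBasis a) with hE
  have hEorth : ∀ a b, star (E a) ⬝ᵥ E b = if a = b then 1 else 0 := by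
    intro a b
    have h0 := hH.eigenvectorBasis.orthonormal
    rw [orthonormal_iff_ite] at h0
    have h2 := h0 a b
    simpa [PiLp.inner_apply, RCLike.inner_apply, dotProduct, E, mul_comm] using h2
  have hEeig : ∀ a, H *ᵥ E a = hH.eigenvalues a • E a := fun a => hH.mulVec_eigenvectorBasis a
  have hq1 : 1 ≤ q := by omega
  set G : Matrix (Fin (q-1)) (Fin q) ℂ :=
    Matrix.of (fun t i => star (E (σ ⟨(k:ℕ)+1+(t:ℕ), by omega⟩)) ⬝ᵥ w i) with hG
  obtain ⟨d, hdker, hd0⟩ : ∃ d ∈ LinearMap.ker G.mulVecLin, d ≠ 0 := by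
    apply Submodule.exists_mem_ne_zero_of_ne_bot
    intro hbot
    have h1 := G.mulVecLin.finrank_range_add_finrank_ker
    rw [hbot, finrank_bot] at h1
    have h2 : Module.finrank ℂ (LinearMap.range G.mulVecLin) ≤ q - 1 :=
      (Submodule.finrank_le _).trans (by simp)
    have h3 : Module.finrank ℂ (Fin q → ℂ) = q := by simp
    omega
  rw [LinearMap.mem_ker, Matrix.mulVecLin_apply] at hdker
  set z : Fin m → ℂ := ∑ i, d i • w i with hz
  set e : Fin m → ℂ := fun a => star (E a) ⬝ᵥ z with he
  set V : Matrix (Fin m) (Fin m) ℂ := (hH.eigenvectorUnitary : Matrix (Fin m) (Fin m) ℂ) with hV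
  have hVE : ∀ r a, V r a = E a r := fun r a => hH.eigenvectorUnitary_apply r a
  have hVV : V * star V = 1 := Unitary.mul_star_self_of_mem hH.eigenvectorUnitary.2
  have hsVz : star V *ᵥ z = e := by
    funext a
    simp only [Matrix.mulVec, dotProduct, Matrix.star_apply, he, hVE]
    rfl
  have hze : z = ∑ a, e a • E a := by
    have h1 : V *ᵥ e = z := by
      rw [← hsVz, Matrix.mulVec_mulVec, hVV, Matrix.one_mulVec]
    funext r
    have h3 := congrFun h1 r
    simp only [Matrix.mulVec, dotProduct, hVE] at h3
    rw [← h3]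
    simp only [Finset.sum_apply, Pi.smul_apply, smul_eq_mul]
    exact Finset.sum_congr rfl fun a _ => by ring
  have hEeig' : ∀ a, H *ᵥ E a = (hH.eigenvalues a : ℂ) • E a := by
    intro a
    rw [hEeig a]
    funext r
    simp [Complex.real_smul]
  have hzE : ∀ a, star z ⬝ᵥ E a = starRingEnd ℂ (e a) := fun a => (conj_dot (E a) z).symm
  have hHzz : star z ⬝ᵥ (H *ᵥ z)
      = ∑ a, (hH.eigenvalues a : ℂ) * (e a * starRingEnd ℂ (e a)) := by
    have step1 : H *ᵥ z = ∑ a, ((hH.eigenvalues a : ℂ) * e a) • E a := by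
      conv_lhs => rw [hze]
      rw [mulVec_sum_smul]
      refine Finset.sum_congr rfl fun a _ => ?_
      rw [hEeig' a, smul_smul, mul_comm]
    rw [step1, dot_sum_smul_right]
    refine Finset.sum_congr rfl fun a _ => ?_
    rw [hzE a]; ring
  have hzz : star z ⬝ᵥ z = ∑ a, e a * starRingEnd ℂ (e a) := by
    have h4 := dot_sum_smul_right z e E
    rw [← hze] at h4
    rw [h4]
    exact Finset.sum_congr rfl fun a _ => by rw [hzE a]
  have hzw : ∀ i, star z ⬝ᵥ w i = starRingEnd ℂ (d i) := by
    intro i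
    rw [← conj_dot (w i) z, hz, dot_sum_smul_ortho w hw d i]
  have hzz' : star z ⬝ᵥ z = ∑ i, d i * starRingEnd ℂ (d i) := by
    have h4 := dot_sum_smul_right z d w
    rw [← hz] at h4
    rw [h4]
    exact Finset.sum_congr rfl fun i _ => by rw [hzw i]
  set nzd : ℝ := ∑ i, Complex.normSq (d i) with hnzd
  set nze : ℝ := ∑ a, Complex.normSq (e a) with hnze
  have hcast : ∀ u : ℂ, u * starRingEnd ℂ u = (Complex.normSq u : ℂ) := fun u => Complex.mul_conj u
  have hnn : nze = nzd := by
    have h5 : ((nze : ℂ)) = ((nzd : ℂ)) := by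
      rw [hnze, hnzd]
      push_cast
      simp_rw [← hcast]
      rw [← hzz, hzz']
    exact_mod_cast h5
  have hRQre : (star z ⬝ᵥ (H *ᵥ z)).re = ∑ a, hH.eigenvalues a * Complex.normSq (e a) := by
    have h6 : star z ⬝ᵥ (H *ᵥ z) = ((∑ a, hH.eigenvalues a * Complex.normSq (e a) : ℝ) : ℂ) := by
      rw [hHzz]
      push_cast
      exact Finset.sum_congr rfl fun a _ => by rw [hcast (e a)]
    rw [h6, Complex.ofReal_re]
  have hker : ∀ t : Fin (q-1), e (σ ⟨(k:ℕ)+1+(t:ℕ), by have := t.2; omega⟩) = 0 := by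
    intro t
    have h7 := congrFun hdker t
    simp only [Matrix.mulVec, dotProduct, Pi.zero_apply] at h7
    have h8 := dot_sum_smul_right z d w
    rw [← hz] at h8
    rw [he]
    simp only []
    rw [dot_sum_smul_right]
    rw [← h7, hG]
    exact Finset.sum_congr rfl fun i _ => by simp only [Matrix.of_apply]; ring
  have hvanish : ∀ t : Fin m, (k : ℕ) < (t : ℕ) → e (σ t) = 0 := by
    intro t ht
    have h9 : ((⟨(k:ℕ)+1+((t:ℕ)-((k:ℕ)+1)), by have := t.2; omega⟩ : Fin m)) = t := by
      apply Fin.ext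
      simp only []
      omega
    have := hker ⟨(t:ℕ)-((k:ℕ)+1), by have := t.2; omega⟩
    simpa [h9] using this
  have hsumb : ∑ a, hH.eigenvalues a * Complex.normSq (e a) ≤ μ * nzd := by
    rw [← Equiv.sum_comp σ (fun a => hH.eigenvalues a * Complex.normSq (e a))]
    have h10 : ∀ t : Fin m,
        hH.eigenvalues (σ t) * Complex.normSq (e (σ t)) ≤ μ * Complex.normSq (e (σ t)) := by
      intro t
      rcases le_or_gt (t : ℕ) (k : ℕ) with hle | hlt
      · exact mul_le_mul_of_nonneg_right
          (Tuple.monotone_sort hH.eigenvalues (show t ≤ k from hle)) (Complex.normSq_nonneg _)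
      · rw [hvanish t hlt]
        simp
    calc ∑ t, hH.eigenvalues (σ t) * Complex.normSq (e (σ t))
        ≤ ∑ t, μ * Complex.normSq (e (σ t)) := Finset.sum_le_sum (fun t _ => h10 t)
      _ = μ * nze := by rw [← Finset.mul_sum, hnze, Equiv.sum_comp σ (fun a => Complex.normSq (e a))]
      _ = μ * nzd := by rw [hnn]
  have hnzd_pos : 0 < nzd := by
    rw [Function.ne_iff] at hd0
    obtain ⟨i, hi⟩ := hd0
    refine Finset.sum_pos' (fun i _ => Complex.normSq_nonneg _) ⟨i, Finset.mem_univ i, ?_⟩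
    exact Complex.normSq_pos.mpr hi
  have hfinal := (hrq d).trans_eq hRQre
  rw [← hnzd] at hfinal
  have := hfinal.trans hsumb
  exact le_of_mul_le_mul_right (by simpa [mul_comm] using this) hnzd_pos

lemma dot_self_re {m : ℕ} (y : Fin m → ℂ) :
    (star y ⬝ᵥ y).re = ∑ r, Complex.normSq (y r) := by
  have h : star y ⬝ᵥ y = ((∑ r, Complex.normSq (y r) : ℝ) : ℂ) := by
    push_cast
    simp only [dotProduct, Pi.star_apply]
    exact Finset.sum_congr rfl fun r _ => by
      rw [← Complex.mul_conj (y r), Complex.star_def]; ring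
  rw [h, Complex.ofReal_re]

lemma dot_DD {m : ℕ} (D : Matrix (Fin m) (Fin m) ℂ) (x y : Fin m → ℂ) :
    star (D *ᵥ x) ⬝ᵥ (D *ᵥ y) = star x ⬝ᵥ ((Dᴴ * D) *ᵥ y) := by
  rw [Matrix.star_mulVec, Matrix.dotProduct_mulVec, Matrix.dotProduct_mulVec,
    Matrix.vecMul_vecMul]

lemma eig_orth {m : ℕ} {H : Matrix (Fin m) (Fin m) ℂ} (hH : H.IsHermitian) (a b : Fin m) :
    star (⇑(hH.eigenvectorBasis a)) ⬝ᵥ ⇑(hH.eigenvectorBasis b) = if a = b then 1 else 0 := by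
  have h0 := hH.eigenvectorBasis.orthonormal
  rw [orthonormal_iff_ite] at h0
  have h2 := h0 a b
  simpa [PiLp.inner_apply, RCLike.inner_apply, dotProduct, mul_comm] using h2

lemma eig_eq {m : ℕ} {H : Matrix (Fin m) (Fin m) ℂ} (hH : H.IsHermitian) (a : Fin m) :
    H *ᵥ ⇑(hH.eigenvectorBasis a) = (hH.eigenvalues a : ℂ) • ⇑(hH.eigenvectorBasis a) := by
  rw [hH.mulVec_eigenvectorBasis a]
  funext r
  simp [Complex.real_smul]

-- Cauchy-Schwarz for dotProduct
lemma cs_dot {m : ℕ} (x g : Fin m → ℂ) :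
    (star x ⬝ᵥ g).re ≤ Real.sqrt ((star x ⬝ᵥ x).re) * Real.sqrt ((star g ⬝ᵥ g).re) := by
  set X : EuclideanSpace ℂ (Fin m) := (WithLp.equiv 2 (Fin m → ℂ)).symm x with hX
  set G : EuclideanSpace ℂ (Fin m) := (WithLp.equiv 2 (Fin m → ℂ)).symm g with hG
  have hinner : (inner ℂ X G : ℂ) = star x ⬝ᵥ g := by
    simp [PiLp.inner_apply, RCLike.inner_apply, dotProduct, hX, hG, mul_comm]
  have hnX : ‖X‖ = Real.sqrt ((star x ⬝ᵥ x).re) := by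
    rw [EuclideanSpace.norm_eq, dot_self_re]
    congr 1
    exact Finset.sum_congr rfl fun r _ => by
      rw [← Complex.sq_norm]; rfl
  have hnG : ‖G‖ = Real.sqrt ((star g ⬝ᵥ g).re) := by
    rw [EuclideanSpace.norm_eq, dot_self_re]
    congr 1
    exact Finset.sum_congr rfl fun r _ => by
      rw [← Complex.sq_norm]; rfl
  calc (star x ⬝ᵥ g).re = (inner ℂ X G : ℂ).re := by rw [hinner]
    _ ≤ ‖(inner ℂ X G : ℂ)‖ := Complex.re_le_norm _
    _ ≤ ‖X‖ * ‖G‖ := norm_inner_le_norm X G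
    _ = _ := by rw [hnX, hnG]


/-- Let `A`, `B` be normal `n×n` complex matrices. Then for every index `j`,
`s_j(AB + BA) ≤ s_j((AAᴴ + BBᴴ) ⊕ (AAᴴ + BBᴴ))`. -/
theorem stmt_18 {n : ℕ} (A B : Matrix (Fin n) (Fin n) ℂ)
    (hA : Aᴴ * A = A * Aᴴ) (hB : Bᴴ * B = B * Bᴴ) (j : Fin n) :
    singularValues (A * B + B * A) j ≤
      singularValues (dsum (A * Aᴴ + B * Bᴴ) (A * Aᴴ + B * Bᴴ)) (Fin.castAdd n j) := by
  classical
  set D := A * B + B * A with hDdef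
  set C := A * Aᴴ + B * Bᴴ with hCdef
  have hL : (Dᴴ * D).IsHermitian := Matrix.isHermitian_conjTranspose_mul_self D
  set σL := Tuple.sort hL.eigenvalues with hσL
  set t : Fin n → ℝ := fun i => hL.eigenvalues (σL i.rev) with ht
  set s : Fin n → ℝ := fun i => Real.sqrt (t i) with hs
  have hsing : singularValues D j = s j := rfl
  rw [hsing]
  have htnn : ∀ i, 0 ≤ t i := fun i =>
    (Matrix.posSemidef_conjTranspose_mul_self D).eigenvalues_nonneg _
  have hssq : ∀ i, s i ^ 2 = t i := fun i => Real.sq_sqrt (htnn i)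
  have hsnn : ∀ i, 0 ≤ s i := fun i => Real.sqrt_nonneg _
  have htmono : ∀ i i' : Fin n, i ≤ i' → t i' ≤ t i := by
    intro i i' hii
    exact Tuple.monotone_sort hL.eigenvalues (Fin.rev_le_rev.mpr hii)
  rcases eq_or_lt_of_le (hsnn j) with hzero | hpos
  · rw [← hzero]; exact Real.sqrt_nonneg _
  -- index embedding
  have hjn := j.isLt
  set ι : Fin ((j : ℕ)+1) → Fin n := fun i => Fin.castLE (by omega) i with hι
  have hιmono : ∀ i, ι i ≤ j := fun i => by
    have := i.isLt
    exact Fin.le_def.mpr (by simpa [hι, Fin.castLE] using by omega)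
  have hιinj : Function.Injective ι := fun a b hab => by
    exact Fin.castLE_injective _ (by exact hab)
  have hspos : ∀ i, 0 < s (ι i) := fun i =>
    lt_of_lt_of_le hpos (Real.sqrt_le_sqrt (htmono _ _ (hιmono i)))
  have hslb : ∀ i, s j ≤ s (ι i) := fun i => Real.sqrt_le_sqrt (htmono _ _ (hιmono i))
  -- eigenvectors of Dᴴ D
  set vv : Fin ((j : ℕ)+1) → Fin n → ℂ :=
    fun i => ⇑(hL.eigenvectorBasis (σL (ι i).rev)) with hvv
  have hvvorth : ∀ i l, star (vv i) ⬝ᵥ vv l = if i = l then 1 else 0 := by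
    intro i l
    rw [hvv]
    rw [eig_orth hL]
    congr 1
    simp only [eq_iff_iff]
    constructor
    · intro h
      exact hιinj (Fin.rev_injective (σL.injective h))
    · intro h; rw [h]
  have hvveig : ∀ i, (Dᴴ * D) *ᵥ vv i = (t (ι i) : ℂ) • vv i := fun i => eig_eq hL _
  -- u vectors
  set u : Fin ((j : ℕ)+1) → Fin n → ℂ :=
    fun i => ((s (ι i) : ℂ))⁻¹ • (D *ᵥ vv i) with hu
  have hscne : ∀ i, ((s (ι i) : ℂ)) ≠ 0 := fun i => by
    exact_mod_cast Complex.ofReal_ne_zero.mpr (ne_of_gt (hspos i))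
  have hDvv : ∀ i, D *ᵥ vv i = (s (ι i) : ℂ) • u i := by
    intro i
    rw [hu]
    simp only []
    rw [smul_inv_smul₀ (hscne i)]
  have hDu : ∀ i, Dᴴ *ᵥ u i = (s (ι i) : ℂ) • vv i := by
    intro i
    rw [hu]
    simp only []
    rw [Matrix.mulVec_smul, Matrix.mulVec_mulVec, hvveig i, smul_smul]
    congr 1
    rw [← hssq (ι i)]
    push_cast
    rw [sq]
    field_simp
  have huorth : ∀ i l, star (u i) ⬝ᵥ u l = if i = l then 1 else 0 := by
    intro i l
    rw [hu]
    simp only []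
    rw [star_smul, smul_dotProduct, dotProduct_smul]
    rw [dot_DD, hvveig l, dotProduct_smul, hvvorth i l]
    rcases eq_or_ne i l with rfl | hne
    · simp only [if_pos rfl]
      rw [← hssq (ι i)]
      simp only [star_inv₀, Complex.star_def, Complex.conj_ofReal, smul_eq_mul]
      push_cast
      rw [sq]
      field_simp
      exact div_self (hscne i)
    · simp [if_neg hne]
  -- block matrices
  set eqv : (Fin n ⊕ Fin n) ≃ Fin (n+n) := finSumFinEquiv with heqv
  set lift : ((Fin n ⊕ Fin n) → ℂ) → (Fin (n+n) → ℂ) := fun x => x ∘ eqv.symm with hlift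
  have dot_lift : ∀ x y : (Fin n ⊕ Fin n) → ℂ, (lift x) ⬝ᵥ (lift y) = x ⬝ᵥ y := by
    intro x y
    simp only [dotProduct, hlift, Function.comp_apply]
    exact Equiv.sum_comp eqv.symm (fun p => x p * y p)
  have star_lift : ∀ x, star (lift x) = lift (star x) := fun x => rfl
  have mulVec_lift : ∀ (N : Matrix (Fin n ⊕ Fin n) (Fin n ⊕ Fin n) ℂ)
      (x : (Fin n ⊕ Fin n) → ℂ), (Matrix.reindex eqv eqv N) *ᵥ (lift x) = lift (N *ᵥ x) := by
    intro N x
    rw [Matrix.reindex_apply, Matrix.submatrix_mulVec_equiv]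
    have hc : (lift x ∘ ⇑(eqv.symm).symm) = x := by
      funext a
      simp [hlift]
    rw [hc]
  set NC := Matrix.fromBlocks C 0 0 C with hNC
  set NR := Matrix.fromBlocks (0 : Matrix (Fin n) (Fin n) ℂ) D Dᴴ 0 with hNR
  have hM2eq : dsum C C = Matrix.reindex eqv eqv NC := rfl
  have hDH : Dᴴ = Bᴴ * Aᴴ + Aᴴ * Bᴴ := by
    rw [hDdef]
    simp [Matrix.conjTranspose_add, Matrix.conjTranspose_mul]
  have hCBA : Bᴴ * B + Aᴴ * A = C := by
    rw [hA, hB, hCdef, add_comm]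
  have hminus : Matrix.fromBlocks A B (-Bᴴ) (-Aᴴ) * (Matrix.fromBlocks A B (-Bᴴ) (-Aᴴ))ᴴ
      = NC - NR := by
    rw [Matrix.fromBlocks_conjTranspose, Matrix.fromBlocks_multiply, sub_eq_add_neg, hNR, hNC,
      Matrix.fromBlocks_neg, Matrix.fromBlocks_add]
    simp only [neg_zero, add_zero, zero_add]
    rw [Matrix.fromBlocks_inj]
    refine ⟨hCdef.symm, ?_, ?_, ?_⟩
    · simp only [Matrix.conjTranspose_neg, Matrix.conjTranspose_conjTranspose, Matrix.mul_neg,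
        hDdef, neg_add]
    · simp only [Matrix.neg_mul, hDH, neg_add]
    · simp only [Matrix.conjTranspose_neg, Matrix.conjTranspose_conjTranspose, Matrix.neg_mul,
        Matrix.mul_neg, neg_neg]
      exact hCBA
  have hplus : Matrix.fromBlocks A B Bᴴ Aᴴ * (Matrix.fromBlocks A B Bᴴ Aᴴ)ᴴ
      = NC + NR := by
    rw [Matrix.fromBlocks_conjTranspose, Matrix.fromBlocks_multiply, hNR, hNC,
      Matrix.fromBlocks_add]
    simp only [add_zero, zero_add]
    rw [Matrix.fromBlocks_inj]
    refine ⟨hCdef.symm, ?_, ?_, ?_⟩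
    · simp only [Matrix.conjTranspose_conjTranspose, hDdef]
    · simp only [hDH]
    · simp only [Matrix.conjTranspose_conjTranspose]
      exact hCBA
  have hpsdminus : (NC - NR).PosSemidef := by
    rw [← hminus]
    exact Matrix.posSemidef_self_mul_conjTranspose _
  -- the orthonormal family on the doubled space
  set cc : ℂ := ((Real.sqrt 2 : ℝ) : ℂ)⁻¹ with hcc
  set wS : Fin ((j:ℕ)+1) → (Fin n ⊕ Fin n) → ℂ := fun i => cc • Sum.elim (u i) (vv i) with hwS
  set w : Fin ((j:ℕ)+1) → Fin (n+n) → ℂ := fun i => lift (wS i) with hw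
  have star_elim : ∀ (a b : Fin n → ℂ), star (Sum.elim a b) = Sum.elim (star a) (star b) := by
    intro a b; funext p; rcases p with p | p <;> rfl
  have hccsq : cc * cc = (2 : ℂ)⁻¹ := by
    rw [hcc, ← mul_inv, ← Complex.ofReal_mul, Real.mul_self_sqrt (by norm_num)]
    norm_num
  have hccstar : star cc = cc := by
    rw [hcc, star_inv₀, Complex.star_def, Complex.conj_ofReal]
  have hworth : ∀ i l, star (w i) ⬝ᵥ w l = if i = l then 1 else 0 := by
    intro i l
    rw [hw]
    simp only []
    rw [star_lift, dot_lift, hwS]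
    simp only []
    rw [star_smul, smul_dotProduct, dotProduct_smul, star_elim,
      sumElim_dotProduct_sumElim, huorth, hvvorth, hccstar]
    split_ifs
    · rw [smul_eq_mul, smul_eq_mul, ← mul_assoc, hccsq]
      norm_num
    · simp
  have hRw : ∀ i, (Matrix.reindex eqv eqv NR) *ᵥ w i = (s (ι i) : ℂ) • w i := by
    intro i
    rw [hw]
    simp only []
    rw [mulVec_lift, hwS]
    simp only []
    rw [Matrix.mulVec_smul]
    have h1 : NR *ᵥ Sum.elim (u i) (vv i) = (s (ι i) : ℂ) • Sum.elim (u i) (vv i) := by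
      rw [hNR, Matrix.fromBlocks_mulVec]
      have e1 : (Sum.elim (u i) (vv i)) ∘ Sum.inl = u i := rfl
      have e2 : (Sum.elim (u i) (vv i)) ∘ Sum.inr = vv i := rfl
      rw [e1, e2, Matrix.zero_mulVec, Matrix.zero_mulVec, zero_add, add_zero, hDvv i, hDu i]
      funext p; rcases p with p | p <;> simp
    rw [h1, smul_comm]
    rfl
  have lift_sum : ∀ (d : Fin ((j:ℕ)+1) → ℂ) (y : Fin ((j:ℕ)+1) → (Fin n ⊕ Fin n) → ℂ),
      ∑ i, d i • lift (y i) = lift (∑ i, d i • y i) := by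
    intro d y
    funext r
    simp [hlift, Finset.sum_apply]
  -- apply the key lemma
  set M2 := dsum C C with hM2
  have hHer : (M2ᴴ * M2).IsHermitian := Matrix.isHermitian_conjTranspose_mul_self M2
  set kk : Fin (n+n) := (Fin.castAdd n j).rev with hkk
  have hkkval : (kk : ℕ) + ((j:ℕ)+1) = n + n := by
    rw [hkk, Fin.val_rev]
    have h1 : ((Fin.castAdd n j) : ℕ) = (j : ℕ) := rfl
    omega
  have hfin : s j ^ 2 ≤ hHer.eigenvalues (Tuple.sort hHer.eigenvalues kk) := by
    apply key_lemma (M2ᴴ * M2) hHer kk hkkval (s j ^ 2) w hworth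
    intro d
    set x : Fin (n+n) → ℂ := ∑ i, d i • w i with hx
    set nz : ℝ := ∑ i, Complex.normSq (d i) with hnz
    have hnznn : 0 ≤ nz := Finset.sum_nonneg fun i _ => Complex.normSq_nonneg _
    set g : Fin (n+n) → ℂ := M2 *ᵥ x with hg
    have hship : star x ⬝ᵥ ((M2ᴴ * M2) *ᵥ x) = star g ⬝ᵥ g := by
      rw [hg, dot_DD M2 x x]
    have hRQnn : 0 ≤ (star g ⬝ᵥ g).re := by
      rw [dot_self_re]
      exact Finset.sum_nonneg fun r _ => Complex.normSq_nonneg _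
    have hxw : ∀ l, star x ⬝ᵥ w l = starRingEnd ℂ (d l) := by
      intro l
      rw [← conj_dot (w l) x, hx, dot_sum_smul_ortho w hworth d l]
    have hxx : star x ⬝ᵥ x = (nz : ℂ) := by
      have h4 := dot_sum_smul_right x d w
      rw [← hx] at h4
      rw [h4, hnz]
      push_cast
      exact Finset.sum_congr rfl fun i _ => by rw [hxw i, Complex.mul_conj]
    have hxxre : (star x ⬝ᵥ x).re = nz := by rw [hxx, Complex.ofReal_re]
    have hRx : (star x ⬝ᵥ ((Matrix.reindex eqv eqv NR) *ᵥ x)).re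
        = ∑ l, s (ι l) * Complex.normSq (d l) := by
      have h5 : (Matrix.reindex eqv eqv NR) *ᵥ x = ∑ l, (d l * (s (ι l) : ℂ)) • w l := by
        rw [hx, mulVec_sum_smul]
        exact Finset.sum_congr rfl fun l _ => by rw [hRw l, smul_smul]
      rw [h5, dot_sum_smul_right]
      have h6 : ∑ l, (d l * (s (ι l):ℂ)) * (star x ⬝ᵥ w l)
          = ((∑ l, s (ι l) * Complex.normSq (d l) : ℝ) : ℂ) := by
        push_cast
        refine Finset.sum_congr rfl fun l _ => ?_
        rw [hxw l, ← Complex.mul_conj (d l)]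
        ring
      rw [h6, Complex.ofReal_re]
    -- transport x to the Sum side
    set xS : (Fin n ⊕ Fin n) → ℂ := ∑ i, d i • wS i with hxS
    have hxlift : x = lift xS := by
      rw [hx, hxS, ← lift_sum]
    have hMR : (star x ⬝ᵥ ((Matrix.reindex eqv eqv NR) *ᵥ x)).re
        ≤ (star x ⬝ᵥ (M2 *ᵥ x)).re := by
      have hPSD := hpsdminus.dotProduct_mulVec_nonneg xS
      have h8 : star x ⬝ᵥ (M2 *ᵥ x) - star x ⬝ᵥ ((Matrix.reindex eqv eqv NR) *ᵥ x)
          = star xS ⬝ᵥ ((NC - NR) *ᵥ xS) := by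
        rw [hxlift, hM2eq, mulVec_lift, mulVec_lift, star_lift, dot_lift, dot_lift,
          Matrix.sub_mulVec, dotProduct_sub]
      have h9 := (Complex.le_def.mp hPSD).1
      rw [Complex.zero_re] at h9
      have h10 : ((star x ⬝ᵥ (M2 *ᵥ x)) - (star x ⬝ᵥ ((Matrix.reindex eqv eqv NR) *ᵥ x))).re
          = (star xS ⬝ᵥ ((NC - NR) *ᵥ xS)).re := by rw [h8]
      rw [Complex.sub_re] at h10
      linarith
    have hCS := cs_dot x g
    rw [hxxre] at hCS
    have hlow : s j * nz ≤ (star x ⬝ᵥ (M2 *ᵥ x)).re := by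
      have h9 : s j * nz ≤ ∑ l, s (ι l) * Complex.normSq (d l) := by
        rw [hnz, Finset.mul_sum]
        exact Finset.sum_le_sum fun l _ =>
          mul_le_mul_of_nonneg_right (hslb l) (Complex.normSq_nonneg _)
      rw [← hRx] at h9
      linarith
    rw [hship]
    have hfin2 : s j * nz ≤ Real.sqrt nz * Real.sqrt ((star g ⬝ᵥ g).re) :=
      le_trans (show s j * nz ≤ (star x ⬝ᵥ g).re by rw [hg]; exact hlow) hCS
    rcases eq_or_lt_of_le hnznn with h0 | hpos2
    · rw [← h0, mul_zero]
      exact hRQnn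
    · have hsq := pow_le_pow_left₀ (by positivity) hfin2 2
      rw [mul_pow, mul_pow, Real.sq_sqrt hnznn, Real.sq_sqrt hRQnn] at hsq
      exact le_of_mul_le_mul_right (by nlinarith [hsq]) hpos2
  have hgoal : singularValues (dsum C C) (Fin.castAdd n j)
      = Real.sqrt (hHer.eigenvalues (Tuple.sort hHer.eigenvalues kk)) := rfl
  rw [hgoal]
  calc s j = Real.sqrt (s j ^ 2) := (Real.sqrt_sq (hsnn j)).symm
    _ ≤ _ := Real.sqrt_le_sqrt hfin
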